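/- Let A = (a_{ij})_{1 ≤ i,j ≤ ℓ} be a real ℓ×ℓ matrix and suppose there exists c₀ ∈ [0,1) such that ‖A‖ := max_{j=1,…,ℓ} Σ_{i=1}^{ℓ} |a_{ij}| ≤ c₀. Then (1 − c₀)^ℓ ≤ det(I − A) ≤ (1 + c₀)^ℓ, where I is the ℓ×ℓ identity matrix. -/

import Mathlib

private lemma det_one_sub_bounds_aux : ∀ (n : ℕ) (A : Matrix (Fin n) (Fin n) ℝ)
    (c₀ : ℝ), 0 ≤ c₀ → c₀ < 1 → (∀ j : Fin n, ∑ i : Fin n, |A i j| ≤ c₀) →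
    (1 - c₀) ^ n ≤ (1 - A).det ∧ (1 - A).det ≤ (1 + c₀) ^ n := by
  intro n
  induction n with
  | zero =>
    intro A c₀ h0 h1 hA
    rw [Matrix.det_isEmpty]
    norm_num
  | succ n ih =>
    intro A c₀ h0 h1 hA
    set B : Matrix (Fin (n+1)) (Fin (n+1)) ℝ := 1 - A with hB
    -- entrywise bounds
    have habs : ∀ i j : Fin (n+1), |A i j| ≤ c₀ := by
      intro i j
      refine le_trans ?_ (hA j)
      exact Finset.single_le_sum (f := fun i => |A i j|) (fun i _ => abs_nonneg _) (Finset.mem_univ i)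
    have hA00 : |A 0 0| ≤ c₀ := habs 0 0
    set p : ℝ := 1 - A 0 0 with hp
    have hp_lb : 1 - c₀ ≤ p := by
      have := (abs_le.mp hA00).2
      simp only [hp]; linarith
    have hp_ub : p ≤ 1 + c₀ := by
      have := (abs_le.mp hA00).1
      simp only [hp]; linarith
    have hp_pos : 0 < p := lt_of_lt_of_le (by linarith) hp_lb
    have hB00 : B 0 0 = p := by
      simp [hB, hp, Matrix.sub_apply, Matrix.one_apply]
    -- column coefficients
    set c : Fin (n+1) → ℝ := fun j => if j = 0 then 0 else - B 0 j / p with hc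
    set C : Matrix (Fin (n+1)) (Fin (n+1)) ℝ := fun i j => B i j + c j * B i 0 with hC
    have hdet : C.det = B.det := by
      rw [← Matrix.det_transpose C, ← Matrix.det_transpose B]
      apply Matrix.det_eq_of_forall_row_eq_smul_add_const c 0 (by simp [hc])
      intro i j
      simp [hC, Matrix.transpose_apply]
      rfl
    -- first row of C
    have hC0 : ∀ j : Fin (n+1), j ≠ 0 → C 0 j = 0 := by
      intro j hj
      simp only [hC, hc, if_neg hj, hB00]
      field_simp
      ring
    have hC00 : C 0 0 = p := by simp [hC, hc, hB00]
    -- Laplace expansion along row 0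
    set D : Matrix (Fin n) (Fin n) ℝ := C.submatrix Fin.succ Fin.succ with hD
    have hdetC : C.det = p * D.det := by
      rw [Matrix.det_succ_row_zero]
      rw [Finset.sum_eq_single 0]
      · simp [hC00, Fin.succAbove_zero, hD]
      · intro j _ hj
        simp [hC0 j hj]
      · simp
    -- D = 1 - A' for the Schur complement A'
    set A' : Matrix (Fin n) (Fin n) ℝ :=
      fun i j => A i.succ j.succ + A 0 j.succ * A i.succ 0 / p with hA'
    have hDA' : D = 1 - A' := by
      ext i j
      have hBi0 : B i.succ 0 = - A i.succ 0 := by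
        simp [hB, Matrix.sub_apply, Matrix.one_apply, (Fin.succ_ne_zero i)]
      have hB0j : B 0 j.succ = - A 0 j.succ := by
        simp [hB, Matrix.sub_apply, Matrix.one_apply, (Fin.succ_ne_zero j).symm]
      have hBij : B i.succ j.succ = (if i = j then (1:ℝ) else 0) - A i.succ j.succ := by
        simp [hB, Matrix.sub_apply, Matrix.one_apply, Fin.succ_inj]
      have key : D i j = B i.succ j.succ + (-B 0 j.succ / p) * B i.succ 0 := by
        show B i.succ j.succ + c j.succ * B i.succ 0 = _
        simp only [hc, if_neg (Fin.succ_ne_zero j)]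
      rw [key, hBi0, hB0j, hBij, Matrix.sub_apply, Matrix.one_apply, hA']
      rcases eq_or_ne i j with hij | hij <;> simp [hij] <;> field_simp <;> ring
    -- column bounds for A'
    have hratio : (c₀ - |A 0 0|) / p ≤ 1 := by
      rw [div_le_one hp_pos]
      simp only [hp]
      linarith [le_abs_self (A 0 0)]
    have hA'col : ∀ j : Fin n, ∑ i : Fin n, |A' i j| ≤ c₀ := by
      intro j
      have hsum1 : ∑ i : Fin n, |A i.succ j.succ| ≤ c₀ - |A 0 j.succ| := by
        have := hA j.succ
        rw [Fin.sum_univ_succ] at this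
        linarith
      have hsum2 : ∑ i : Fin n, |A i.succ 0| ≤ c₀ - |A 0 0| := by
        have := hA 0
        rw [Fin.sum_univ_succ] at this
        linarith
      have step : ∀ i : Fin n, |A' i j| ≤ |A i.succ j.succ| + |A 0 j.succ| * |A i.succ 0| / p := by
        intro i
        simp only [hA']
        refine le_trans (abs_add_le _ _) ?_
        rw [abs_div, abs_mul, abs_of_pos hp_pos]
      calc ∑ i : Fin n, |A' i j|
          ≤ ∑ i : Fin n, (|A i.succ j.succ| + |A 0 j.succ| * |A i.succ 0| / p) :=
            Finset.sum_le_sum (fun i _ => step i)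
        _ = (∑ i : Fin n, |A i.succ j.succ|) + |A 0 j.succ| * ((∑ i : Fin n, |A i.succ 0|) / p) := by
            rw [Finset.sum_add_distrib, ← Finset.sum_div, ← Finset.mul_sum, mul_div_assoc]
        _ ≤ (c₀ - |A 0 j.succ|) + |A 0 j.succ| * ((c₀ - |A 0 0|) / p) := by
            refine add_le_add hsum1 (mul_le_mul_of_nonneg_left ?_ (abs_nonneg _))
            exact (div_le_div_iff_of_pos_right hp_pos).mpr hsum2
        _ ≤ (c₀ - |A 0 j.succ|) + |A 0 j.succ| * 1 :=
            add_le_add_right (mul_le_mul_of_nonneg_left hratio (abs_nonneg _)) _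
        _ = c₀ := by ring
    obtain ⟨ihl, ihu⟩ := ih A' c₀ h0 h1 hA'col
    rw [← hDA'] at ihl ihu
    have h1c : (0:ℝ) ≤ 1 - c₀ := by linarith
    have hDnn : 0 ≤ D.det := le_trans (pow_nonneg h1c n) ihl
    constructor
    · calc (1 - c₀) ^ (n+1) = (1 - c₀) * (1 - c₀) ^ n := by ring
        _ ≤ p * D.det := by
            apply mul_le_mul hp_lb ihl (pow_nonneg h1c n) (le_of_lt hp_pos)
        _ = C.det := hdetC.symm
        _ = B.det := hdet
    · calc B.det = C.det := hdet.symm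
        _ = p * D.det := hdetC
        _ ≤ (1 + c₀) * (1 + c₀) ^ n := by
            apply mul_le_mul hp_ub ihu hDnn (by linarith)
        _ = (1 + c₀) ^ (n+1) := by ring

/-- **Proposition 3.9** (Kumano-go). If a real `ℓ×ℓ` matrix `A` satisfies
`‖A‖ := max_j Σ_i |a_{ij}| ≤ c₀` for some `c₀ ∈ [0,1)`, then
`(1 - c₀)^ℓ ≤ det(I - A) ≤ (1 + c₀)^ℓ`. -/
theorem det_one_sub_bounds (ℓ : ℕ) (hℓ : 1 ≤ ℓ) (A : Matrix (Fin ℓ) (Fin ℓ) ℝ)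
    (c₀ : ℝ) (hc₀0 : 0 ≤ c₀) (hc₀1 : c₀ < 1)
    (hA : ∀ j : Fin ℓ, ∑ i : Fin ℓ, |A i j| ≤ c₀) :
    (1 - c₀) ^ ℓ ≤ (1 - A).det ∧ (1 - A).det ≤ (1 + c₀) ^ ℓ :=
  det_one_sub_bounds_aux ℓ A c₀ hc₀0 hc₀1 hA
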